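/- If there is a non-principal ultrafilter on ω, then there is a subset of 2^ω that is not Lebesgue measurable. Consequently, if every set of reals is Lebesgue measurable, then every ultrafilter on any set is countably complete (closed under countable intersections). -/

import Mathlib

open MeasureTheory
open scoped ENNReal symmDiff

/-- The Cantor space `2^ω`. -/
abbrev CantorB := ℕ → Bool

/-- The basic open set `[s]` of the Cantor space determined by a finite binary sequence. -/
def cylB (s : List Bool) : Set CantorB :=
  {x | ∀ i : Fin s.length, x i = s.get i}

namespace UFAux

def cylF (N : ℕ) (v : Fin N → Bool) : Set CantorB := {x | (fun i : Fin N => x i) = v}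

lemma mem_cylF {N : ℕ} {v : Fin N → Bool} {x : CantorB} :
    x ∈ cylF N v ↔ (fun i : Fin N => x (i : ℕ)) = v := Iff.rfl

lemma cylF_eq_cylB (N : ℕ) (v : Fin N → Bool) : cylF N v = cylB (List.ofFn v) := by
  ext x
  simp only [mem_cylF, cylB, Set.mem_setOf_eq, funext_iff, List.get_ofFn]
  rw [Fin.forall_iff, Fin.forall_iff]
  simp [List.length_ofFn]

lemma measurableSet_cylF {N : ℕ} {v : Fin N → Bool} : MeasurableSet (cylF N v) := by
  have : cylF N v = ⋂ i : Fin N, {x : CantorB | x i = v i} := by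
    ext x; simp [mem_cylF, funext_iff]
  rw [this]
  refine MeasurableSet.iInter fun i => ?_
  show MeasurableSet ((fun x : CantorB => x (i : ℕ)) ⁻¹' {v i})
  exact (measurable_pi_apply (i : ℕ)) (measurableSet_singleton (v i))

lemma disjoint_cylF {N : ℕ} {v w : Fin N → Bool} (h : v ≠ w) :
    Disjoint (cylF N v) (cylF N w) := by
  rw [Set.disjoint_left]
  intro x hv hw
  exact h (hv.symm.trans hw)

lemma mem_biUnion_cylF {N : ℕ} {S : Finset (Fin N → Bool)} {x : CantorB} :
    x ∈ ⋃ v ∈ S, cylF N v ↔ (fun i : Fin N => x (i : ℕ)) ∈ S := by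
  simp [mem_cylF, eq_comm]

def D : Set (Set CantorB) := {t | ∃ (N : ℕ) (S : Finset (Fin N → Bool)), t = ⋃ v ∈ S, cylF N v}

lemma lift_biUnion {N M : ℕ} (h : N ≤ M) (S : Finset (Fin N → Bool)) :
    (⋃ v ∈ S, cylF N v)
      = ⋃ w ∈ Finset.univ.filter
          (fun w : Fin M → Bool => (fun i : Fin N => w (Fin.castLE h i)) ∈ S), cylF M w := by
  ext x
  rw [mem_biUnion_cylF, mem_biUnion_cylF]
  simp [Finset.mem_filter]

lemma cylF_zero (v : Fin 0 → Bool) : cylF 0 v = Set.univ := by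
  ext x; simp [mem_cylF, funext_iff]

lemma isSetAlgebra_D : IsSetAlgebra D := by
  constructor
  · exact ⟨0, ∅, by simp⟩
  · rintro s ⟨N, S, rfl⟩
    refine ⟨N, Sᶜ, ?_⟩
    ext x
    rw [Set.mem_compl_iff, mem_biUnion_cylF, mem_biUnion_cylF, Finset.mem_compl]
  · rintro s t ⟨N, S, rfl⟩ ⟨M, T, rfl⟩
    refine ⟨max N M, ?_, ?_⟩
    · exact (Finset.univ.filter
          (fun w : Fin (max N M) → Bool => (fun i : Fin N => w (Fin.castLE (le_max_left N M) i)) ∈ S))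
        ∪ (Finset.univ.filter
          (fun w : Fin (max N M) → Bool => (fun i : Fin M => w (Fin.castLE (le_max_right N M) i)) ∈ T))
    · rw [lift_biUnion (le_max_left N M) S, lift_biUnion (le_max_right N M) T]
      ext x
      rw [Set.mem_union, mem_biUnion_cylF, mem_biUnion_cylF, mem_biUnion_cylF, Finset.mem_union]

lemma isPiSystem_D : IsPiSystem D := by
  rintro s ⟨N, S, rfl⟩ t ⟨M, T, rfl⟩ -
  refine ⟨max N M,
    (Finset.univ.filter
        (fun w : Fin (max N M) → Bool => (fun i : Fin N => w (Fin.castLE (le_max_left N M) i)) ∈ S))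
      ∩ (Finset.univ.filter
        (fun w : Fin (max N M) → Bool => (fun i : Fin M => w (Fin.castLE (le_max_right N M) i)) ∈ T)), ?_⟩
  rw [lift_biUnion (le_max_left N M) S, lift_biUnion (le_max_right N M) T]
  ext x
  rw [Set.mem_inter_iff, mem_biUnion_cylF, mem_biUnion_cylF, mem_biUnion_cylF, Finset.mem_inter]

lemma measurableSet_D {t : Set CantorB} (ht : t ∈ D) : MeasurableSet t := by
  obtain ⟨N, S, rfl⟩ := ht
  exact Finset.measurableSet_biUnion S fun v _ => measurableSet_cylF

lemma gen_D : (inferInstance : MeasurableSpace CantorB) = MeasurableSpace.generateFrom D := by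
  refine le_antisymm ?_ (MeasurableSpace.generateFrom_le fun t ht => measurableSet_D ht)
  have heval : ∀ n : ℕ, @Measurable CantorB Bool (MeasurableSpace.generateFrom D) _
      (fun x : CantorB => x n) := by
    intro n
    refine @measurable_to_countable' Bool CantorB _ _ (MeasurableSpace.generateFrom D) _ ?_
    intro b
    have : (fun x : CantorB => x n) ⁻¹' {b}
        = ⋃ v ∈ Finset.univ.filter (fun v : Fin (n+1) → Bool => v ⟨n, n.lt_succ_self⟩ = b),
            cylF (n+1) v := by
      ext x
      rw [Set.mem_preimage, Set.mem_singleton_iff, mem_biUnion_cylF]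
      simp
    rw [this]
    exact MeasurableSpace.measurableSet_generateFrom ⟨n+1, _, rfl⟩
  have hid : @Measurable CantorB CantorB (MeasurableSpace.generateFrom D) MeasurableSpace.pi id :=
    (@measurable_pi_iff CantorB ℕ (fun _ => Bool) (MeasurableSpace.generateFrom D) (fun _ => inferInstance) id).mpr heval
  intro s hs
  exact hid hs

lemma measure_biUnion_cylF (ν : Measure CantorB)
    (hc : ∀ (N : ℕ) (v : Fin N → Bool), ν (cylF N v) = (1/2 : ℝ≥0∞) ^ N)
    (N : ℕ) (S : Finset (Fin N → Bool)) :
    ν (⋃ v ∈ S, cylF N v) = S.card * (1/2 : ℝ≥0∞) ^ N := by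
  rw [measure_biUnion_finset ?_ (fun v _ => measurableSet_cylF)]
  · simp [hc, Finset.sum_const, nsmul_eq_mul]
  · intro v hv w hw hvw
    exact disjoint_cylF hvw

lemma measure_eq_of_cylF (ν₁ ν₂ : Measure CantorB)
    (h1 : ∀ (N : ℕ) (v : Fin N → Bool), ν₁ (cylF N v) = (1/2 : ℝ≥0∞) ^ N)
    (h2 : ∀ (N : ℕ) (v : Fin N → Bool), ν₂ (cylF N v) = (1/2 : ℝ≥0∞) ^ N)
    [IsFiniteMeasure ν₁] : ν₁ = ν₂ := by
  refine ext_of_generate_finite D gen_D isPiSystem_D ?_ ?_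
  · rintro s ⟨N, S, rfl⟩
    rw [measure_biUnion_cylF ν₁ h1, measure_biUnion_cylF ν₂ h2]
  · have hu : (Set.univ : Set CantorB) = cylF 0 (fun i => i.elim0) := (cylF_zero _).symm
    rw [hu, h1, h2]

def flp (m : ℕ → Bool) : CantorB → CantorB := fun x n => xor (x n) (m n)

lemma measurable_flp (m : ℕ → Bool) : Measurable (flp m) := by
  refine measurable_pi_lambda _ fun n => ?_
  exact (measurable_from_top (f := fun b : Bool => xor b (m n))).comp (measurable_pi_apply n)

lemma flp_preimage_cylF (m : ℕ → Bool) {N : ℕ} (v : Fin N → Bool) :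
    flp m ⁻¹' cylF N v = cylF N (fun i => xor (v i) (m i)) := by
  ext x
  simp only [Set.mem_preimage, mem_cylF, funext_iff, flp]
  refine forall_congr' fun i => ?_
  cases m (i : ℕ) <;> cases v i <;> simp

lemma flp_measurePreserving {μ : Measure CantorB}
    (hcf : ∀ (N : ℕ) (v : Fin N → Bool), μ (cylF N v) = (1/2 : ℝ≥0∞) ^ N)
    [IsProbabilityMeasure μ] (m : ℕ → Bool) : MeasurePreserving (flp m) μ μ := by
  refine ⟨measurable_flp m, ?_⟩
  haveI : IsProbabilityMeasure (μ.map (flp m)) :=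
    Measure.isProbabilityMeasure_map (measurable_flp m).aemeasurable
  refine measure_eq_of_cylF _ _ ?_ hcf
  intro N v
  rw [Measure.map_apply (measurable_flp m) measurableSet_cylF, flp_preimage_cylF, hcf]

lemma uf_mem_of_symmDiff_finite (U : Ultrafilter ℕ) (hU : ∀ s : Set ℕ, s.Finite → s ∉ U)
    {S T : Set ℕ} (h : (S \ T).Finite) (hS : S ∈ U) (hT : S \ (S \ T) ⊆ T) : T ∈ U := by
  have h1 : (S \ T)ᶜ ∈ U := Ultrafilter.compl_mem_iff_notMem.mpr (hU _ h)
  exact U.mem_of_superset (Filter.inter_mem hS h1) (fun x hx => hT ⟨hx.1, hx.2⟩)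

lemma uf_congr (U : Ultrafilter ℕ) (hU : ∀ s : Set ℕ, s.Finite → s ∉ U)
    {S T : Set ℕ} (h : ((S \ T) ∪ (T \ S)).Finite) : S ∈ U ↔ T ∈ U := by
  constructor
  · intro hS
    refine uf_mem_of_symmDiff_finite U hU (h.subset Set.subset_union_left) hS ?_
    intro x hx
    by_contra hxT
    exact hx.2 ⟨hx.1, hxT⟩
  · intro hT
    refine uf_mem_of_symmDiff_finite U hU (h.subset Set.subset_union_right) hT ?_
    intro x hx
    by_contra hxS
    exact hx.2 ⟨hx.1, hxS⟩

section Invariance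

variable (U : Ultrafilter ℕ)

lemma flp_preimage_A (hU : ∀ s : Set ℕ, s.Finite → s ∉ U) (m : ℕ → Bool)
    (hm : {n : ℕ | m n = true}.Finite) :
    flp m ⁻¹' {x : CantorB | {n : ℕ | x n = true} ∈ U} = {x : CantorB | {n : ℕ | x n = true} ∈ U} := by
  ext x
  simp only [Set.mem_preimage, Set.mem_setOf_eq, flp]
  refine uf_congr U hU (hm.subset ?_)
  rintro n (⟨h1, h2⟩ | ⟨h1, h2⟩) <;>
  · simp only [Set.mem_setOf_eq] at *
    by_contra hmn
    rw [Bool.not_eq_true] at hmn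
    simp [hmn] at h1 h2
    exact absurd h1 (by simp [h2])

lemma flp_true_preimage_A :
    flp (fun _ => true) ⁻¹' {x : CantorB | {n : ℕ | x n = true} ∈ U}
      = {x : CantorB | {n : ℕ | x n = true} ∈ U}ᶜ := by
  ext x
  simp only [Set.mem_preimage, Set.mem_setOf_eq, flp, Set.mem_compl_iff]
  have : {n : ℕ | xor (x n) true = true} = {n : ℕ | x n = true}ᶜ := by
    ext n; simp
  rw [this]
  exact Ultrafilter.compl_mem_iff_notMem

end Invariance

lemma val_split (μ : Measure CantorB) [IsProbabilityMeasure μ] {B : Set CantorB}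
    (hB : MeasurableSet B) (s : Set CantorB) :
    (μ (s ∩ B)).toReal + (μ (s ∩ Bᶜ)).toReal = (μ s).toReal := by
  rw [← ENNReal.toReal_add (measure_ne_top μ _) (measure_ne_top μ _), ← Set.diff_eq,
    measure_inter_add_diff s hB]

lemma exists_good (μ : Measure CantorB) [IsProbabilityMeasure μ]
    (hcf : ∀ (N : ℕ) (v : Fin N → Bool), μ (cylF N v) = (1/2 : ℝ≥0∞) ^ N)
    {B : Set CantorB} (hBmeas : MeasurableSet B) (hvalB : (μ B).toReal = 1/2)
    {N : ℕ} {S : Finset (Fin N → Bool)}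
    (hsym : (μ (B ∆ ⋃ v ∈ S, cylF N v)).toReal < 1/8) :
    ∃ v ∈ S, (1/2) * ((1/2:ℝ)^N) < (μ (B ∩ cylF N v)).toReal := by
  set C := ⋃ v ∈ S, cylF N v with hC
  have hCmeas : MeasurableSet C := Finset.measurableSet_biUnion S fun v _ => measurableSet_cylF
  have hmono : ∀ {s t : Set CantorB}, s ⊆ t → (μ s).toReal ≤ (μ t).toReal := fun h =>
    ENNReal.toReal_mono (measure_ne_top μ _) (measure_mono h)
  have hvalcyl : ∀ v : Fin N → Bool, (μ (cylF N v)).toReal = (1/2:ℝ)^N := by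
    intro v
    rw [hcf]
    simp [ENNReal.toReal_pow, ENNReal.toReal_div]
  have hvalC : (μ C).toReal = (S.card : ℝ) * (1/2:ℝ)^N := by
    rw [measure_biUnion_cylF μ hcf]
    simp [ENNReal.toReal_mul, ENNReal.toReal_pow, ENNReal.toReal_div]
  have hd1 : (μ (B \ C)).toReal ≤ (μ (B ∆ C)).toReal :=
    hmono (by rw [Set.symmDiff_def]; exact Set.subset_union_left)
  have hd2 : (μ (C \ B)).toReal ≤ (μ (B ∆ C)).toReal :=
    hmono (by rw [Set.symmDiff_def]; exact Set.subset_union_right)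
  have hsplitB : (μ (B ∩ C)).toReal + (μ (B ∩ Cᶜ)).toReal = (μ B).toReal := val_split μ hCmeas B
  have hBCc : B ∩ Cᶜ = B \ C := by rw [Set.diff_eq]
  have hCB : C ∩ Bᶜ = C \ B := by rw [Set.diff_eq]
  have hBCle : (μ (B ∩ C)).toReal ≤ (μ C).toReal := hmono Set.inter_subset_right
  have hvalCge : (3:ℝ)/8 ≤ (μ C).toReal := by
    rw [hBCc] at hsplitB
    linarith [hsplitB, hd1, hBCle, hvalB]
  -- sum decomposition of C ∩ Bᶜ
  have hsum : (μ (C ∩ Bᶜ)).toReal = ∑ v ∈ S, (μ (cylF N v ∩ Bᶜ)).toReal := by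
    have : C ∩ Bᶜ = ⋃ v ∈ S, (cylF N v ∩ Bᶜ) := by
      rw [hC, Set.iUnion₂_inter]
    rw [this, measure_biUnion_finset ?_ (fun v _ => measurableSet_cylF.inter hBmeas.compl),
      ENNReal.toReal_sum (fun v _ => measure_ne_top μ _)]
    intro v hv w hw hvw
    exact (disjoint_cylF hvw).mono Set.inter_subset_left Set.inter_subset_left
  by_contra hcon
  push_neg at hcon
  have hlow : ∀ v ∈ S, (1/2) * ((1/2:ℝ)^N) ≤ (μ (cylF N v ∩ Bᶜ)).toReal := by
    intro v hv
    have h1 := hcon v hv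
    have h2 := val_split μ hBmeas (cylF N v)
    rw [Set.inter_comm] at h1
    rw [hvalcyl v] at h2
    nlinarith [h2, h1, pow_pos (by norm_num : (0:ℝ) < 1/2) N]
  have hsumge : (S.card : ℝ) * ((1/2) * ((1/2:ℝ)^N)) ≤ (μ (C ∩ Bᶜ)).toReal := by
    rw [hsum]
    calc (S.card : ℝ) * ((1/2) * ((1/2:ℝ)^N)) = ∑ _v ∈ S, (1/2) * ((1/2:ℝ)^N) := by
          rw [Finset.sum_const, nsmul_eq_mul]
      _ ≤ ∑ v ∈ S, (μ (cylF N v ∩ Bᶜ)).toReal := Finset.sum_le_sum hlow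
  rw [hCB] at hsumge
  have : (3:ℝ)/16 ≤ (μ (C \ B)).toReal := by
    calc (3:ℝ)/16 = (1/2) * (3/8) := by norm_num
      _ ≤ (1/2) * ((S.card : ℝ) * (1/2:ℝ)^N) := by
          rw [← hvalC]; linarith [hvalCge]
      _ = (S.card : ℝ) * ((1/2) * ((1/2:ℝ)^N)) := by ring
      _ ≤ _ := hsumge
  linarith [hd2, hsym]

theorem part1 (μ : Measure CantorB) (hprob : IsProbabilityMeasure μ)
    (hcyl : ∀ s : List Bool, μ (cylB s) = (1 / 2 : ENNReal) ^ s.length)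
    (U : Ultrafilter ℕ) (hU : ∀ s : Set ℕ, s.Finite → s ∉ U) :
    ¬ NullMeasurableSet {x : CantorB | {n : ℕ | x n = true} ∈ U} μ := by
  haveI := hprob
  intro hnull
  set A := {x : CantorB | {n : ℕ | x n = true} ∈ U} with hA
  have hcf : ∀ (N : ℕ) (v : Fin N → Bool), μ (cylF N v) = (1/2 : ℝ≥0∞) ^ N := by
    intro N v; rw [cylF_eq_cylB, hcyl, List.length_ofFn]
  obtain ⟨B, hsub, hBmeas, hABae⟩ := hnull.exists_measurable_superset_ae_eq
  -- hABae : B =ᵐ[μ] A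
  have mp : ∀ m : ℕ → Bool, MeasurePreserving (flp m) μ μ := flp_measurePreserving hcf
  have flpB_ae : ∀ m : ℕ → Bool, {n : ℕ | m n = true}.Finite → flp m ⁻¹' B =ᵐ[μ] B := by
    intro m hm
    have e1 : flp m ⁻¹' B =ᵐ[μ] flp m ⁻¹' A :=
      (mp m).quasiMeasurePreserving.preimage_ae_eq hABae
    rw [flp_preimage_A U hU m hm] at e1
    exact e1.trans hABae.symm
  -- μ B = 1/2
  have hBc : μ Bᶜ = μ B := by
    have h1 : flp (fun _ => true) ⁻¹' B =ᵐ[μ] Bᶜ := by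
      have e1 : flp (fun _ => true) ⁻¹' B =ᵐ[μ] flp (fun _ => true) ⁻¹' A :=
        (mp _).quasiMeasurePreserving.preimage_ae_eq hABae
      rw [flp_true_preimage_A U] at e1
      exact e1.trans hABae.symm.compl
    calc μ Bᶜ = μ (flp (fun _ => true) ⁻¹' B) := (measure_congr h1).symm
      _ = μ B := (mp _).measure_preimage hBmeas.nullMeasurableSet
  have hB2 : μ B = 1/2 := by
    have hsum := measure_add_measure_compl (μ := μ) hBmeas
    rw [hBc] at hsum
    rw [measure_univ] at hsum
    rw [ENNReal.eq_div_iff (by norm_num) (by norm_num), two_mul]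
    exact hsum
  have hvalB : (μ B).toReal = 1/2 := by
    rw [hB2]
    simp [ENNReal.toReal_div]
  have hvalBc : (μ Bᶜ).toReal = 1/2 := by rw [hBc]; exact hvalB
  -- approximation
  have hdense : μ.MeasureDense D :=
    Measure.MeasureDense.of_generateFrom_isSetAlgebra_finite μ isSetAlgebra_D gen_D
  obtain ⟨t, htD, hlt⟩ := hdense.approx B hBmeas (measure_ne_top μ B) (1/8) (by norm_num)
  obtain ⟨N, S, rfl⟩ := htD
  have hsym : (μ (B ∆ ⋃ v ∈ S, cylF N v)).toReal < 1/8 := by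
    rw [← ENNReal.lt_ofReal_iff_toReal_lt (measure_ne_top μ _)]
    exact hlt
  have hsymc : (μ (Bᶜ ∆ ⋃ v ∈ Sᶜ, cylF N v)).toReal < 1/8 := by
    have hcompl : (⋃ v ∈ Sᶜ, cylF N v) = (⋃ v ∈ S, cylF N v)ᶜ := by
      ext x
      rw [mem_biUnion_cylF, Set.mem_compl_iff, mem_biUnion_cylF, Finset.mem_compl]
    rw [hcompl, compl_symmDiff_compl]
    exact hsym
  obtain ⟨v, hvS, hv⟩ := exists_good μ hcf hBmeas hvalB hsym
  obtain ⟨v', hv'S, hv'⟩ := exists_good μ hcf hBmeas.compl hvalBc hsymc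
  -- the finite flip carrying v' to v
  set m : ℕ → Bool := (fun n => if h : n < N then xor (v ⟨n, h⟩) (v' ⟨n, h⟩) else false) with hm
  have hmfin : {n : ℕ | m n = true}.Finite := by
    apply (Set.finite_Iio N).subset
    intro n hn
    simp only [Set.mem_setOf_eq, hm] at hn
    by_contra hnN
    rw [dif_neg (by simpa using hnN)] at hn
    exact Bool.false_ne_true hn
  have hpre : flp m ⁻¹' cylF N v' = cylF N v := by
    rw [flp_preimage_cylF]
    have hfun : (fun i : Fin N => xor (v' i) (m (i : ℕ))) = v := by
      funext i
      have hmi : m (i : ℕ) = xor (v i) (v' i) := by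
        simp only [hm, dif_pos i.isLt, Fin.eta]
      rw [hmi]
      cases v i <;> cases v' i <;> simp
    rw [hfun]
  have htrans : μ (B ∩ cylF N v') = μ (B ∩ cylF N v) := by
    have h1 : μ (flp m ⁻¹' (B ∩ cylF N v')) = μ (B ∩ cylF N v') :=
      (mp m).measure_preimage (hBmeas.inter measurableSet_cylF).nullMeasurableSet
    rw [Set.preimage_inter, hpre] at h1
    rw [← h1]
    exact measure_congr ((flpB_ae m hmfin).inter (Filter.EventuallyEq.rfl))
  -- contradiction
  have hsplit := val_split μ hBmeas.compl (cylF N v')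
  have hvalcyl : (μ (cylF N v')).toReal = (1/2:ℝ)^N := by
    rw [hcf]
    simp [ENNReal.toReal_pow, ENNReal.toReal_div]
  rw [hvalcyl] at hsplit
  -- hsplit : (μ (cylF N v' ∩ Bᶜ)).toReal + (μ (cylF N v' ∩ Bᶜᶜ)).toReal = (1/2)^N
  rw [compl_compl, Set.inter_comm _ B, Set.inter_comm _ Bᶜ] at hsplit
  have : (μ (B ∩ cylF N v')).toReal = (μ (B ∩ cylF N v)).toReal := by rw [htrans]
  linarith [hv, hv', hsplit, this]

end UFAux

/-- With respect to the standard coin-flipping measure `μ` on `2^ω`: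
(1) if `U` is a non-principal ultrafilter on `ω` (contains no finite sets), then the
subset of `2^ω` coding `U` is not Lebesgue measurable; consequently
(2) if every subset of `2^ω` is Lebesgue measurable, then every ultrafilter on any set is
countably complete (closed under countable intersections). -/
theorem nonprincipal_ultrafilter_gives_nonmeasurable_set
    (μ : Measure CantorB) (hprob : IsProbabilityMeasure μ)
    (hcyl : ∀ s : List Bool, μ (cylB s) = (1 / 2 : ENNReal) ^ s.length) :
    (∀ U : Ultrafilter ℕ, (∀ s : Set ℕ, s.Finite → s ∉ U) →
        ¬ NullMeasurableSet {x : CantorB | {n : ℕ | x n = true} ∈ U} μ) ∧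
    ((∀ A : Set CantorB, NullMeasurableSet A μ) →
        ∀ (α : Type) (V : Ultrafilter α) (g : ℕ → Set α),
          (∀ n, g n ∈ V) → (⋂ n, g n) ∈ V) := by
  constructor
  · exact fun U hU => UFAux.part1 μ hprob hcyl U hU
  · intro h α V g hg
    by_contra hIn
    have hC : (⋂ n, g n)ᶜ ∈ V := Ultrafilter.compl_mem_iff_notMem.mpr hIn
    set f : α → ℕ := fun a => sInf {n | a ∉ g n} with hf
    refine UFAux.part1 μ hprob hcyl (V.map f) ?_ (h _)
    intro s hs hsU
    rw [Ultrafilter.mem_map] at hsU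
    obtain ⟨M, hM⟩ := hs.bddAbove
    have hG : (⋂ k ∈ Finset.range (M+1), g k) ∈ V :=
      (Filter.biInter_finset_mem _).mpr (fun k _ => hg k)
    have hmem : f ⁻¹' s ∩ ((⋂ n, g n)ᶜ ∩ ⋂ k ∈ Finset.range (M+1), g k) ∈ V :=
      Filter.inter_mem hsU (Filter.inter_mem hC hG)
    have hempty : f ⁻¹' s ∩ ((⋂ n, g n)ᶜ ∩ ⋂ k ∈ Finset.range (M+1), g k) = ∅ := by
      ext a
      simp only [Set.mem_inter_iff, Set.mem_preimage, Set.mem_compl_iff,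
        Set.mem_empty_iff_false, iff_false, not_and]
      intro hfa hcompl hall
      have hne : {n : ℕ | a ∉ g n}.Nonempty := by
        by_contra hno
        rw [Set.not_nonempty_iff_eq_empty] at hno
        apply hcompl
        refine Set.mem_iInter.mpr fun n => ?_
        by_contra hgn
        exact absurd (Set.eq_empty_iff_forall_notMem.mp hno n) (by simp [hgn])
      have hfa_not : a ∉ g (f a) := Nat.sInf_mem hne
      have hfa_le : f a ≤ M := hM hfa
      have : a ∈ g (f a) := by
        have := Set.mem_iInter₂.mp hall (f a) (by
          simp [Finset.mem_range, Nat.lt_succ_iff, hfa_le])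
        exact this
      exact hfa_not this
    rw [hempty] at hmem
    exact Filter.empty_notMem (V : Filter α) hmem
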